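/- arXiv:math/0503137 — 2 statements merged into one kernel-verified Lean document; each statement's English description precedes it below -/
import Mathlib

section
/- Let g : [0,∞) → [0,∞) be concave with g(0) = 0, and let Y be a nonnegative random variable with E[Y²] < ∞ and positive variance. Then E[g(Y)²] · (E[Y])² ≤ (E[g(Y)])² · E[Y²]. -/
open MeasureTheory
set_option maxHeartbeats 1000000

theorem stmt18 {Ω : Type*} [MeasurableSpace Ω] (μ : Measure Ω) [IsProbabilityMeasure μ]
    (g : ℝ → ℝ) (hconc : ConcaveOn ℝ (Set.Ici 0) g) (hg0 : g 0 = 0)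
    (hgnn : ∀ x : ℝ, 0 ≤ x → 0 ≤ g x)
    (Y : Ω → ℝ) (hY : ∀ ω, 0 ≤ Y ω)
    (hInt : Integrable Y μ) (hInt2 : Integrable (fun ω => (Y ω) ^ 2) μ)
    (hvar : (∫ ω, Y ω ∂μ) ^ 2 < ∫ ω, (Y ω) ^ 2 ∂μ) :
    (∫ ω, (g (Y ω)) ^ 2 ∂μ) * (∫ ω, Y ω ∂μ) ^ 2 ≤
      (∫ ω, g (Y ω) ∂μ) ^ 2 * ∫ ω, (Y ω) ^ 2 ∂μ := by
  -- notation
  set I : ℝ := ∫ ω, Y ω ∂μ with hI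
  set I2 : ℝ := ∫ ω, (Y ω) ^ 2 ∂μ with hI2
  have hInn : 0 ≤ I := integral_nonneg hY
  have hIpos : 0 < I := by
    rcases hInn.lt_or_eq with h | h
    · exact h
    · exfalso
      have hY0 : Y =ᵐ[μ] 0 := (integral_eq_zero_iff_of_nonneg hY hInt).mp h.symm
      have hsq : (fun ω => (Y ω) ^ 2) =ᵐ[μ] 0 := by
        filter_upwards [hY0] with ω hω
        simp [hω]
      have h2 : I2 = 0 := by
        rw [hI2, integral_congr_ae hsq]; simp
      rw [← h, h2] at hvar
      simp at hvar
  -- star-shaped: x * g y ≤ y * g x for 0 < x ≤ y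
  have hstar : ∀ x y : ℝ, 0 < x → x ≤ y → x * g y ≤ y * g x := by
    intro x y hx hxy
    have hy : 0 < y := hx.trans_le hxy
    have h1 := hconc.2 (Set.mem_Ici.mpr hy.le) (Set.mem_Ici.mpr le_rfl)
      (show (0:ℝ) ≤ x / y by positivity)
      (show (0:ℝ) ≤ 1 - x / y by rw [sub_nonneg]; exact div_le_one_of_le₀ hxy hy.le)
      (show x / y + (1 - x / y) = 1 by ring)
    simp only [smul_eq_mul, hg0, mul_zero, add_zero] at h1
    rw [div_mul_cancel₀ _ hy.ne'] at h1
    rw [div_mul_eq_mul_div, div_le_iff₀ hy] at h1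
    linarith [h1]
  -- monotone on [0, ∞)
  have hmono : ∀ x y : ℝ, 0 ≤ x → x ≤ y → g x ≤ g y := by
    intro x y hx hxy
    by_contra hlt
    push_neg at hlt
    have hxy' : x < y := hxy.lt_of_ne (by rintro rfl; exact lt_irrefl _ hlt)
    set d : ℝ := g x - g y with hd
    have hd0 : 0 < d := sub_pos.mpr hlt
    set z : ℝ := max y ((y * g x - x * g y) / d) + 1 with hz
    have hzy : y < z := lt_of_le_of_lt (le_max_left _ _) (lt_add_one _)
    have hz2 : (y * g x - x * g y) / d < z := lt_of_le_of_lt (le_max_right _ _) (lt_add_one _)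
    have hzx : x < z := hxy'.trans hzy
    have hzx0 : 0 < z - x := sub_pos.mpr hzx
    have hzy0 : (0:ℝ) ≤ z - y := by linarith
    have hyx0 : (0:ℝ) ≤ y - x := by linarith
    have hcomb := hconc.2 (Set.mem_Ici.mpr hx) (Set.mem_Ici.mpr (hx.trans (hxy.trans hzy.le)))
      (show (0:ℝ) ≤ (z - y) / (z - x) from div_nonneg hzy0 hzx0.le)
      (show (0:ℝ) ≤ (y - x) / (z - x) from div_nonneg hyx0 hzx0.le)
      (show (z - y) / (z - x) + (y - x) / (z - x) = 1 by field_simp; ring)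
    rw [smul_eq_mul, smul_eq_mul, smul_eq_mul, smul_eq_mul] at hcomb
    have hpt : (z - y) / (z - x) * x + (y - x) / (z - x) * z = y := by
      field_simp; ring
    rw [hpt] at hcomb
    have hgz : 0 ≤ g z := hgnn z (by linarith)
    have hmul := mul_le_mul_of_nonneg_left hcomb hzx0.le
    have hid : (z - x) * ((z - y) / (z - x) * g x + (y - x) / (z - x) * g z)
        = (z - y) * g x + (y - x) * g z := by
      field_simp
    rw [hid] at hmul
    -- hmul : (z-y) * g x + (y-x) * g z ≤ (z-x) * g y
    have h4 : z * d ≤ y * g x - x * g y := by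
      have hnn : 0 ≤ (y - x) * g z := mul_nonneg hyx0 hgz
      nlinarith [hmul, hnn]
    rw [div_lt_iff₀ hd0] at hz2
    nlinarith [hz2, h4]
  -- measurability of g ∘ Y
  have hgY_meas : AEStronglyMeasurable (fun ω => g (Y ω)) μ := by
    have hGmono : Monotone (fun y : ℝ => g (max y 0)) := fun u v huv =>
      hmono _ _ (le_max_right u 0) (max_le_max huv le_rfl)
    have heq : (fun ω => g (Y ω)) = fun ω => g (max (Y ω) 0) := by
      funext ω; rw [max_eq_left (hY ω)]
    rw [heq]
    exact (hGmono.measurable.comp_aemeasurable hInt.aemeasurable).aestronglyMeasurable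
  -- growth bound
  have hg1 : 0 ≤ g 1 := hgnn 1 zero_le_one
  have hbound : ∀ y : ℝ, 0 ≤ y → g y ≤ g 1 + g 1 * y := by
    intro y hy
    rcases le_total y 1 with h | h
    · have := hmono y 1 hy h
      nlinarith [mul_nonneg hg1 hy]
    · have := hstar 1 y one_pos h
      nlinarith [hg1]
  -- integrability of g ∘ Y and (g ∘ Y)^2
  have gInt : Integrable (fun ω => g (Y ω)) μ := by
    apply Integrable.mono' ((integrable_const (g 1)).add (hInt.const_mul (g 1))) hgY_meas
    filter_upwards with ω
    simp only [Pi.add_apply]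
    rw [Real.norm_eq_abs, abs_of_nonneg (hgnn _ (hY ω))]
    exact hbound _ (hY ω)
  have gsqAESM : AEStronglyMeasurable (fun ω => (g (Y ω)) ^ 2) μ := by
    simpa [pow_two, Pi.mul_def] using hgY_meas.mul hgY_meas
  have gsqInt : Integrable (fun ω => (g (Y ω)) ^ 2) μ := by
    apply Integrable.mono'
      (((integrable_const (g 1 ^ 2)).add (hInt.const_mul (2 * g 1 ^ 2))).add
        (hInt2.const_mul (g 1 ^ 2))) gsqAESM
    filter_upwards with ω
    simp only [Pi.add_apply]
    rw [Real.norm_eq_abs, abs_of_nonneg (sq_nonneg _)]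
    have h1 := hbound _ (hY ω)
    have h2 := hgnn _ (hY ω)
    have h3 := hY ω
    nlinarith [mul_le_mul h1 h1 h2 (by positivity : (0:ℝ) ≤ g 1 + g 1 * Y ω)]
  -- c
  set Ig : ℝ := ∫ ω, g (Y ω) ∂μ with hIg
  have hIgnn : 0 ≤ Ig := integral_nonneg fun ω => hgnn _ (hY ω)
  set c : ℝ := Ig / I with hc
  have hc0 : 0 ≤ c := div_nonneg hIgnn hInn
  have hcI : c * I = Ig := div_mul_cancel₀ _ hIpos.ne'
  have hI2nn : 0 ≤ I2 := integral_nonneg fun ω => sq_nonneg _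
  clear_value I I2 Ig c
  -- key inequality
  have key : (∫ ω, (g (Y ω)) ^ 2 ∂μ) ≤ c ^ 2 * I2 := by
    by_cases hA : ∀ y : ℝ, 0 ≤ y → c * y ≤ g y
    · -- g(Y) ≥ cY pointwise, zero-mean difference ⇒ a.e. equality
      have hdInt : Integrable (fun ω => g (Y ω) - c * Y ω) μ := gInt.sub (hInt.const_mul c)
      have hdnn : 0 ≤ fun ω => g (Y ω) - c * Y ω := fun ω => sub_nonneg.mpr (hA _ (hY ω))
      have hdzero : ∫ ω, (g (Y ω) - c * Y ω) ∂μ = 0 := by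
        rw [integral_sub gInt (hInt.const_mul c), integral_const_mul, ← hI, ← hIg, hcI]
        ring
      have hae := (integral_eq_zero_iff_of_nonneg hdnn hdInt).mp hdzero
      have haesq : (fun ω => (g (Y ω)) ^ 2) =ᵐ[μ] fun ω => c ^ 2 * (Y ω) ^ 2 := by
        filter_upwards [hae] with ω hω
        have : g (Y ω) = c * Y ω := by simpa [sub_eq_zero] using hω
        rw [this]; ring
      rw [integral_congr_ae haesq, integral_const_mul, ← hI2]
    · by_cases hA' : ∀ y : ℝ, 0 ≤ y → g y ≤ c * y
      · have hdInt : Integrable (fun ω => c * Y ω - g (Y ω)) μ := (hInt.const_mul c).sub gInt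
        have hdnn : 0 ≤ fun ω => c * Y ω - g (Y ω) := fun ω => sub_nonneg.mpr (hA' _ (hY ω))
        have hdzero : ∫ ω, (c * Y ω - g (Y ω)) ∂μ = 0 := by
          rw [integral_sub (hInt.const_mul c) gInt, integral_const_mul, ← hI, ← hIg, hcI]
          ring
        have hae := (integral_eq_zero_iff_of_nonneg hdnn hdInt).mp hdzero
        have haesq : (fun ω => (g (Y ω)) ^ 2) =ᵐ[μ] fun ω => c ^ 2 * (Y ω) ^ 2 := by
          filter_upwards [hae] with ω hω
          have : g (Y ω) = c * Y ω := by
            have := sub_eq_zero.mp hω; linarith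
          rw [this]; ring
        rw [integral_congr_ae haesq, integral_const_mul, ← hI2]
      -- genuine crossing case
      · push_neg at hA hA'
        obtain ⟨y₀, hy00, hy0⟩ := hA
        obtain ⟨y₁, hy10, hy1⟩ := hA'
        have hy0pos : 0 < y₀ := by
          rcases hy00.lt_or_eq with h | h
          · exact h
          · exfalso; rw [← h, hg0, mul_zero] at hy0; exact lt_irrefl _ hy0
        set S : Set ℝ := {y : ℝ | 0 ≤ y ∧ c * y < g y} with hS
        have hy1S : y₁ ∈ S := ⟨hy10, hy1⟩
        have hub : ∀ y : ℝ, 0 < y → g y < c * y → ∀ s ∈ S, s ≤ y := by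
          intro y hy hgy s hsS
          by_contra hys
          push_neg at hys
          have := hstar y s hy hys.le
          have hcs : c * s < g s := hsS.2
          nlinarith [hsS.1]
        have hbdd : BddAbove S := ⟨y₀, fun s hs => hub y₀ hy0pos hy0 s hs⟩
        set a : ℝ := sSup S with ha
        clear_value a
        have ha0 : 0 ≤ a := hy10.trans (by rw [ha]; exact le_csSup hbdd hy1S)
        set K : ℝ := g a + c * a with hK
        clear_value K
        have ptwise : ∀ y : ℝ, 0 ≤ y →
            (g y) ^ 2 ≤ c ^ 2 * y ^ 2 + K * g y - K * (c * y) := by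
          intro y hy
          rcases lt_trichotomy (c * y) (g y) with h | h | h
          · have hyS : y ∈ S := ⟨hy, h⟩
            have hya : y ≤ a := by rw [ha]; exact le_csSup hbdd hyS
            have h1 : g y ≤ g a := hmono y a hy hya
            have h2 : c * y ≤ c * a := mul_le_mul_of_nonneg_left hya hc0
            nlinarith [h1, h2, h, hK]
          · rw [← h]
            have hq : (c * y) ^ 2 = c ^ 2 * y ^ 2 := by ring
            linarith
          · have hypos : 0 < y := by
              rcases hy.lt_or_eq with h' | h'
              · exact h'
              · exfalso; rw [← h', hg0, mul_zero] at h; exact lt_irrefl _ h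
            have hay : a ≤ y := by rw [ha]; exact csSup_le ⟨y₁, hy1S⟩ (hub y hypos h)
            have h1 : g a ≤ g y := hmono a y ha0 hay
            have h2 : c * a ≤ c * y := mul_le_mul_of_nonneg_left hay hc0
            nlinarith [h1, h2, h, hK]
        have int1a : Integrable (fun ω => c ^ 2 * (Y ω) ^ 2) μ := hInt2.const_mul (c ^ 2)
        have int1b : Integrable (fun ω => K * g (Y ω)) μ := gInt.const_mul K
        have int1 : Integrable (fun ω => c ^ 2 * (Y ω) ^ 2 + K * g (Y ω)) μ := int1a.add int1b
        have int2 : Integrable (fun ω => K * (c * Y ω)) μ := (hInt.const_mul c).const_mul K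
        have comboInt : Integrable
            (fun ω => c ^ 2 * (Y ω) ^ 2 + K * g (Y ω) - K * (c * Y ω)) μ := int1.sub int2
        have key' := integral_mono gsqInt comboInt (fun ω => ptwise _ (hY ω))
        rw [integral_sub int1 int2, integral_add int1a int1b,
          integral_const_mul, integral_const_mul, integral_const_mul, integral_const_mul,
          ← hI, ← hIg, ← hI2, hcI] at key'
        linarith [key']
  -- conclude
  calc (∫ ω, (g (Y ω)) ^ 2 ∂μ) * I ^ 2
      ≤ (c ^ 2 * I2) * I ^ 2 := mul_le_mul_of_nonneg_right key (sq_nonneg I)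
    _ = (c * I) ^ 2 * I2 := by ring
    _ = Ig ^ 2 * I2 := by rw [hcI]
end

section
/- Let f : [0,∞) → [0,∞) be differentiable, weakly increasing and concave with f(0) = 0, and let X be a nonnegative random variable with E[X⁴] < ∞ and E[X²] > 0. Then E[f(X)⁴] · (E[X²])² ≤ (E[f(X)²])² · E[X⁴]. -/
open MeasureTheory

theorem stmt19 {Ω : Type*} [MeasurableSpace Ω] (μ : Measure Ω) [IsProbabilityMeasure μ]
    (f : ℝ → ℝ)
    (hdiff : DifferentiableOn ℝ f (Set.Ici 0))
    (hmono : MonotoneOn f (Set.Ici 0))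
    (hconc : ConcaveOn ℝ (Set.Ici 0) f)
    (hfnn : ∀ x : ℝ, 0 ≤ x → 0 ≤ f x)
    (hf0 : f 0 = 0)
    (X : Ω → ℝ) (hX : ∀ ω, 0 ≤ X ω)
    (hInt2 : Integrable (fun ω => (X ω) ^ 2) μ)
    (hInt4 : Integrable (fun ω => (X ω) ^ 4) μ)
    (hpos : 0 < ∫ ω, (X ω) ^ 2 ∂μ) :
    (∫ ω, (f (X ω)) ^ 4 ∂μ) * (∫ ω, (X ω) ^ 2 ∂μ) ^ 2 ≤
      (∫ ω, (f (X ω)) ^ 2 ∂μ) ^ 2 * ∫ ω, (X ω) ^ 4 ∂μ := by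
  -- f(x)/x is nonincreasing
  have hratio : ∀ s t : ℝ, 0 ≤ s → s ≤ t → f t * s ≤ f s * t := by
    intro s t hs hst
    rcases eq_or_lt_of_le (hs.trans hst) with h0 | ht
    · have hs0 : s = 0 := le_antisymm (hst.trans h0.symm.le) hs
      simp [hs0, ← h0, hf0]
    · have hdiv1 : s / t ≤ 1 := (div_le_one ht).2 hst
      have key := hconc.2 (Set.mem_Ici.2 (hs.trans hst)) (Set.mem_Ici.2 (le_refl (0:ℝ)))
        (div_nonneg hs ht.le) (show (0:ℝ) ≤ 1 - s / t by linarith)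
        (show s / t + (1 - s / t) = 1 by ring)
      simp only [smul_eq_mul, mul_zero, add_zero, hf0] at key
      have h1 : s / t * t = s := div_mul_cancel₀ s ht.ne'
      rw [h1] at key
      have := mul_le_mul_of_nonneg_right key ht.le
      calc f t * s = (s / t * f t) * t := by field_simp
        _ ≤ f s * t := this
  -- measurability
  have hXm : AEMeasurable X μ := by
    have h1 : AEMeasurable (fun ω => X ω ^ 2) μ := hInt2.aestronglyMeasurable.aemeasurable
    have h2 : AEMeasurable (fun ω => Real.sqrt (X ω ^ 2)) μ :=
      Real.continuous_sqrt.measurable.comp_aemeasurable h1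
    exact h2.congr (Filter.Eventually.of_forall fun ω => by simp [Real.sqrt_sq (hX ω)])
  have hFcont : Continuous (fun x : ℝ => f (max x 0)) :=
    hdiff.continuousOn.comp_continuous (continuous_id.max continuous_const)
      (fun x => Set.mem_Ici.2 (le_max_right x 0))
  have hgm : AEMeasurable (fun ω => f (X ω)) μ := by
    have h := hFcont.measurable.comp_aemeasurable hXm
    exact h.congr (Filter.Eventually.of_forall fun ω => by
      simp [Function.comp, max_eq_left (hX ω)])
  have hf1 : 0 ≤ f 1 := hfnn 1 zero_le_one
  -- pointwise bounds
  have hb2 : ∀ x : ℝ, 0 ≤ x → f x ^ 2 ≤ f 1 ^ 2 * (1 + x ^ 2) := by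
    intro x hx
    rcases le_total x 1 with h | h
    · have h1 : f x ≤ f 1 := hmono (Set.mem_Ici.2 hx) (Set.mem_Ici.2 zero_le_one) h
      have h2 : f x ^ 2 ≤ f 1 ^ 2 := pow_le_pow_left₀ (hfnn x hx) h1 2
      nlinarith [sq_nonneg x, sq_nonneg (f 1)]
    · have h1 : f x * 1 ≤ f 1 * x := hratio 1 x zero_le_one h
      have h2 : f x ^ 2 ≤ (f 1 * x) ^ 2 :=
        pow_le_pow_left₀ (hfnn x hx) (by linarith) 2
      nlinarith [sq_nonneg (f 1)]
  have hb4 : ∀ x : ℝ, 0 ≤ x → f x ^ 4 ≤ f 1 ^ 4 * (1 + x ^ 4) := by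
    intro x hx
    rcases le_total x 1 with h | h
    · have h1 : f x ≤ f 1 := hmono (Set.mem_Ici.2 hx) (Set.mem_Ici.2 zero_le_one) h
      have h2 : f x ^ 4 ≤ f 1 ^ 4 := pow_le_pow_left₀ (hfnn x hx) h1 4
      nlinarith [pow_nonneg hx 4, pow_nonneg hf1 4]
    · have h1 : f x * 1 ≤ f 1 * x := hratio 1 x zero_le_one h
      have h2 : f x ^ 4 ≤ (f 1 * x) ^ 4 :=
        pow_le_pow_left₀ (hfnn x hx) (by linarith) 4
      nlinarith [pow_nonneg hf1 4]
  -- integrability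
  have hg2int : Integrable (fun ω => f (X ω) ^ 2) μ := by
    have hbint : Integrable (fun ω => f 1 ^ 2 * (1 + X ω ^ 2)) μ :=
      ((integrable_const 1).add hInt2).const_mul _
    refine hbint.mono' (hgm.pow_const 2).aestronglyMeasurable
      (Filter.Eventually.of_forall fun ω => ?_)
    rw [Real.norm_eq_abs, abs_of_nonneg (by positivity)]
    exact hb2 _ (hX ω)
  have hg4int : Integrable (fun ω => f (X ω) ^ 4) μ := by
    have hbint : Integrable (fun ω => f 1 ^ 4 * (1 + X ω ^ 4)) μ :=
      ((integrable_const 1).add hInt4).const_mul _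
    refine hbint.mono' (hgm.pow_const 4).aestronglyMeasurable
      (Filter.Eventually.of_forall fun ω => ?_)
    rw [Real.norm_eq_abs, abs_of_nonneg (by positivity)]
    exact hb4 _ (hX ω)
  have hI2fnn : 0 ≤ ∫ ω, f (X ω) ^ 2 ∂μ :=
    integral_nonneg fun ω => by positivity
  have hI4nn : 0 ≤ ∫ ω, X ω ^ 4 ∂μ := integral_nonneg fun ω => by positivity
  rcases hI2fnn.eq_or_lt with hI2f0 | hI2fpos
  · -- degenerate case : E f(X)^2 = 0
    have hae : (fun ω => f (X ω) ^ 2) =ᵐ[μ] 0 :=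
      (integral_eq_zero_iff_of_nonneg (fun ω => by positivity) hg2int).1 hI2f0.symm
    have hae4 : (fun ω => f (X ω) ^ 4) =ᵐ[μ] 0 := by
      filter_upwards [hae] with ω h
      simp only [Pi.zero_apply] at h ⊢
      have : f (X ω) ^ 4 = (f (X ω) ^ 2) ^ 2 := by ring
      rw [this, h]; norm_num
    have h4 : ∫ ω, f (X ω) ^ 4 ∂μ = 0 := by
      calc ∫ ω, f (X ω) ^ 4 ∂μ = ∫ _, (0:ℝ) ∂μ := integral_congr_ae hae4
        _ = 0 := integral_zero _ _
    rw [h4, ← hI2f0]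
    simp
  · -- main case
    set lam : ℝ := (∫ ω, X ω ^ 2 ∂μ) / (∫ ω, f (X ω) ^ 2 ∂μ) with hlamdef
    have hlam : lam * ∫ ω, f (X ω) ^ 2 ∂μ = ∫ ω, X ω ^ 2 ∂μ :=
      div_mul_cancel₀ _ hI2fpos.ne'
    have hlampos : 0 < lam := div_pos hpos hI2fpos
    set A : Set ℝ := {t : ℝ | 0 ≤ t ∧ t ^ 2 ≤ lam * f t ^ 2} with hAdef
    have h0A : (0:ℝ) ∈ A := ⟨le_rfl, by simp [hf0]⟩
    have hdc : ∀ t ∈ A, ∀ t', 0 ≤ t' → t' ≤ t → t' ∈ A := by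
      intro t ht t' ht' htt'
      obtain ⟨ht0, ht2⟩ := ht
      rcases eq_or_lt_of_le ht0 with h0 | htpos
      · have ht'0 : t' = 0 := le_antisymm (htt'.trans h0.symm.le) ht'
        exact ht'0 ▸ h0A
      · refine ⟨ht', ?_⟩
        have hr : f t * t' ≤ f t' * t := hratio t' t ht' htt'
        have hsq : (f t * t') ^ 2 ≤ (f t' * t) ^ 2 :=
          pow_le_pow_left₀ (mul_nonneg (hfnn t ht0) ht') hr 2
        have hkey : t' ^ 2 * t ^ 2 ≤ lam * f t' ^ 2 * t ^ 2 := by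
          nlinarith [mul_le_mul_of_nonneg_right ht2 (sq_nonneg t'),
            mul_le_mul_of_nonneg_left hsq hlampos.le]
        exact le_of_mul_le_mul_right hkey (by positivity)
    have key : lam ^ 2 * ∫ ω, f (X ω) ^ 4 ∂μ ≤ ∫ ω, X ω ^ 4 ∂μ := by
      by_cases hbdd : BddAbove A
      · set s : ℝ := sSup A with hsdef
        have hs0 : 0 ≤ s := le_csSup hbdd h0A
        set M : ℝ := lam * f s ^ 2 + s ^ 2 with hMdef
        have hpt : ∀ t : ℝ, 0 ≤ t →
            lam ^ 2 * f t ^ 4 - t ^ 4 ≤ M * (lam * f t ^ 2 - t ^ 2) := by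
          intro t ht
          rcases le_or_gt (t ^ 2) (lam * f t ^ 2) with hc | hc
          · have hts : t ≤ s := le_csSup hbdd ⟨ht, hc⟩
            have hfts : f t ≤ f s := hmono (Set.mem_Ici.2 ht) (Set.mem_Ici.2 hs0) hts
            have hfts2 : f t ^ 2 ≤ f s ^ 2 := pow_le_pow_left₀ (hfnn t ht) hfts 2
            have hts2 : t ^ 2 ≤ s ^ 2 := pow_le_pow_left₀ ht hts 2
            have hM : lam * f t ^ 2 + t ^ 2 ≤ M := by
              have := mul_le_mul_of_nonneg_left hfts2 hlampos.le
              rw [hMdef]; linarith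
            nlinarith [mul_nonneg (sub_nonneg.2 hc) (sub_nonneg.2 hM)]
          · have hst : s ≤ t := by
              by_contra hlt
              push_neg at hlt
              obtain ⟨t'', ht''A, htt''⟩ := exists_lt_of_lt_csSup ⟨0, h0A⟩ hlt
              have := (hdc t'' ht''A t ht htt''.le).2
              linarith
            have hfst : f s ≤ f t := hmono (Set.mem_Ici.2 hs0) (Set.mem_Ici.2 ht) hst
            have hfst2 : f s ^ 2 ≤ f t ^ 2 := pow_le_pow_left₀ (hfnn s hs0) hfst 2
            have hst2 : s ^ 2 ≤ t ^ 2 := pow_le_pow_left₀ hs0 hst 2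
            have hM : M ≤ lam * f t ^ 2 + t ^ 2 := by
              have := mul_le_mul_of_nonneg_left hfst2 hlampos.le
              rw [hMdef]; linarith
            nlinarith [mul_nonneg (sub_nonneg.2 hc.le) (sub_nonneg.2 hM)]
        have hint1 : Integrable (fun ω => lam ^ 2 * f (X ω) ^ 4 - X ω ^ 4) μ :=
          (hg4int.const_mul _).sub hInt4
        have hint2 : Integrable (fun ω => M * (lam * f (X ω) ^ 2 - X ω ^ 2)) μ :=
          ((hg2int.const_mul _).sub hInt2).const_mul _
        have hmon := integral_mono hint1 hint2 (fun ω => hpt (X ω) (hX ω))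
        rw [integral_sub (hg4int.const_mul _) hInt4, integral_const_mul,
          integral_const_mul, integral_sub (hg2int.const_mul _) hInt2,
          integral_const_mul] at hmon
        have hz : lam * ∫ ω, f (X ω) ^ 2 ∂μ - ∫ ω, X ω ^ 2 ∂μ = 0 := by
          rw [hlam]; ring
        rw [hz, mul_zero] at hmon
        linarith
      · have hall : ∀ t : ℝ, 0 ≤ t → t ^ 2 ≤ lam * f t ^ 2 := by
          intro t ht
          obtain ⟨t'', ht''A, htt''⟩ := not_bddAbove_iff.1 hbdd t
          exact (hdc t'' ht''A t ht htt''.le).2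
        have hzero : ∫ ω, (lam * f (X ω) ^ 2 - X ω ^ 2) ∂μ = 0 := by
          rw [integral_sub (hg2int.const_mul _) hInt2, integral_const_mul, hlam, sub_self]
        have hae : (fun ω => lam * f (X ω) ^ 2 - X ω ^ 2) =ᵐ[μ] 0 :=
          (integral_eq_zero_iff_of_nonneg (fun ω => sub_nonneg.2 (hall (X ω) (hX ω)))
            ((hg2int.const_mul _).sub hInt2)).1 hzero
        have hae4 : (fun ω => lam ^ 2 * f (X ω) ^ 4) =ᵐ[μ] (fun ω => X ω ^ 4) := by
          filter_upwards [hae] with ω h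
          simp only [Pi.zero_apply] at h
          have h2 : lam * f (X ω) ^ 2 = X ω ^ 2 := by linarith
          calc lam ^ 2 * f (X ω) ^ 4 = (lam * f (X ω) ^ 2) ^ 2 := by ring
            _ = (X ω ^ 2) ^ 2 := by rw [h2]
            _ = X ω ^ 4 := by ring
        have : lam ^ 2 * ∫ ω, f (X ω) ^ 4 ∂μ = ∫ ω, X ω ^ 4 ∂μ := by
          rw [← integral_const_mul]
          exact integral_congr_ae hae4
        exact this.le
    have hI2sq : (∫ ω, X ω ^ 2 ∂μ) ^ 2 = lam ^ 2 * (∫ ω, f (X ω) ^ 2 ∂μ) ^ 2 := by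
      rw [← hlam]; ring
    rw [hI2sq]
    nlinarith [mul_le_mul_of_nonneg_right key (sq_nonneg (∫ ω, f (X ω) ^ 2 ∂μ))]
end
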